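/- (Weighted Poincaré inequality with linear weight) Let ρ(x) = 1 - x/L on (0, L). For every function φ ∈ H¹_loc(0,L) with φ(0) = 0, φ ∈ L²(0,L), and ρ·φ' ∈ L²(0,L), one has ‖φ‖_{L²(0,L)} ≤ 2L·‖ρ·φ'‖_{L²(0,L)}. -/

import Mathlib

open Set MeasureTheory

theorem stmt5 (L : ℝ) (hL : 0 < L) (ρ : ℝ → ℝ) (hρ : ∀ x, ρ x = 1 - x / L)
    (φ φ' : ℝ → ℝ)
    (hcont : ContinuousOn φ (Icc 0 L))
    (hderiv : ∀ x ∈ Ioo (0:ℝ) L, HasDerivAt φ (φ' x) x)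
    (h0 : φ 0 = 0)
    (hφL2 : IntegrableOn (fun x => (φ x) ^ 2) (Ioo 0 L))
    (hdL2 : IntegrableOn (fun x => (ρ x * φ' x) ^ 2) (Ioo 0 L)) :
    Real.sqrt (∫ x in Ioo (0:ℝ) L, (φ x) ^ 2) ≤
      2 * L * Real.sqrt (∫ x in Ioo (0:ℝ) L, (ρ x * φ' x) ^ 2) := by
  set μ := volume.restrict (Ioo (0:ℝ) L) with hμ
  set g : ℝ → ℝ := fun x => ρ x * φ' x with hg
  -- measurability
  have hφm : AEStronglyMeasurable φ μ :=
    (hcont.mono Ioo_subset_Icc_self).aestronglyMeasurable measurableSet_Ioo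
  have hgm : AEStronglyMeasurable g μ := by
    have hmeas : AEStronglyMeasurable (fun x => ρ x * deriv φ x) μ := by
      apply Measurable.aestronglyMeasurable
      apply Measurable.mul _ (measurable_deriv φ)
      have : ρ = fun x => 1 - x / L := funext hρ
      rw [this]
      fun_prop
    refine hmeas.congr ?_
    rw [hμ] at *
    filter_upwards [ae_restrict_mem measurableSet_Ioo] with x hx
    rw [hg]
    simp only [(hderiv x hx).deriv]
  -- L² membership
  have hφ2 : MemLp φ 2 μ := (memLp_two_iff_integrable_sq hφm).2 hφL2
  have hg2 : MemLp g 2 μ := (memLp_two_iff_integrable_sq hgm).2 hdL2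
  have h2e : ENNReal.ofReal (2:ℝ) = 2 := by norm_num
  have h1 : Integrable (fun x => φ x * g x) μ := by
    refine Integrable.mono' ((hφL2.add hdL2).div_const 2) (hφm.mul hgm) ?_
    filter_upwards with x
    rw [Real.norm_eq_abs, abs_mul]
    simp only [Pi.add_apply, hg]
    nlinarith [sq_nonneg (|φ x| - |ρ x * φ' x|), sq_abs (φ x), sq_abs (ρ x * φ' x),
      abs_nonneg (φ x), abs_nonneg (ρ x * φ' x)]
  -- integration by parts: F x = φ x ^ 2 * (L - x)
  have hLρ : ∀ x, L - x = L * ρ x := by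
    intro x; rw [hρ x]; field_simp
  set F : ℝ → ℝ := fun x => φ x ^ 2 * (L - x) with hF
  set F' : ℝ → ℝ := fun x => 2 * L * (φ x * g x) - φ x ^ 2 with hF'
  have hFderiv : ∀ x ∈ Ioo (0:ℝ) L, HasDerivAt F (F' x) x := by
    intro x hx
    have h1' : HasDerivAt (fun y => φ y ^ 2) (2 * φ x * φ' x) x := by
      have := (hderiv x hx).fun_pow 2
      simpa [mul_comm, mul_assoc, mul_left_comm] using this
    have h2' : HasDerivAt (fun y : ℝ => L - y) (-1) x := by
      simpa using (hasDerivAt_id x).const_sub L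
    have : HasDerivAt (fun y => φ y ^ 2 * (L - y)) (2 * φ x * φ' x * (L - x) + φ x ^ 2 * -1) x :=
      h1'.fun_mul h2'
    convert this using 1
    show 2 * L * (φ x * (ρ x * φ' x)) - φ x ^ 2 = _
    rw [hLρ x]
    ring
  have hFcont : ContinuousOn F (Icc 0 L) := by
    exact (hcont.pow 2).mul (continuous_const.sub continuous_id).continuousOn
  have hF'int : IntervalIntegrable F' volume 0 L := by
    rw [intervalIntegrable_iff_integrableOn_Ioo_of_le hL.le]
    exact ((h1.const_mul (2 * L)).sub hφL2)
  have hFTC := intervalIntegral.integral_eq_sub_of_hasDerivAt_of_le hL.le hFcont hFderiv hF'int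
  have hFL : F L = 0 := by simp [hF]
  have hF0 : F 0 = 0 := by simp [hF, h0]
  rw [hFL, hF0, sub_self] at hFTC
  rw [intervalIntegral.integral_of_le hL.le, integral_Ioc_eq_integral_Ioo] at hFTC
  have hsplit : (∫ x in Ioo (0:ℝ) L, F' x) =
      2 * L * (∫ x in Ioo (0:ℝ) L, φ x * g x) - ∫ x in Ioo (0:ℝ) L, φ x ^ 2 := by
    rw [hF']
    rw [integral_sub (h1.const_mul (2 * L)) hφL2, integral_const_mul]
  have key : (∫ x in Ioo (0:ℝ) L, φ x ^ 2) = 2 * L * ∫ x in Ioo (0:ℝ) L, φ x * g x := by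
    rw [hsplit] at hFTC; linarith
  -- Cauchy-Schwarz
  have hpq : Real.HolderConjugate 2 2 := Real.HolderConjugate.two_two
  have hCS : (∫ x in Ioo (0:ℝ) L, φ x * g x) ≤
      Real.sqrt (∫ x in Ioo (0:ℝ) L, φ x ^ 2) *
        Real.sqrt (∫ x in Ioo (0:ℝ) L, (g x) ^ 2) := by
    have hb : (∫ x in Ioo (0:ℝ) L, φ x * g x) ≤ ∫ x in Ioo (0:ℝ) L, ‖φ x‖ * ‖g x‖ := by
      refine integral_mono h1
        (h1.norm.mono' (hφm.norm.mul hgm.norm)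
          (Filter.Eventually.of_forall fun x => by simp [abs_mul]))
        (fun x => ?_)
      calc φ x * g x ≤ |φ x * g x| := le_abs_self _
        _ = ‖φ x‖ * ‖g x‖ := by simp [abs_mul]
    have hφ2' : MemLp φ (ENNReal.ofReal 2) μ := by rwa [h2e]
    have hg2' : MemLp g (ENNReal.ofReal 2) μ := by rwa [h2e]
    have := integral_mul_norm_le_Lp_mul_Lq hpq hφ2' hg2'
    refine hb.trans (this.trans_eq ?_)
    have e1 : (∫ x, ‖φ x‖ ^ (2:ℝ) ∂μ) = ∫ x in Ioo (0:ℝ) L, φ x ^ 2 := by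
      apply integral_congr_ae
      filter_upwards with x
      have h := Real.rpow_natCast |φ x| 2
      push_cast at h
      rw [Real.norm_eq_abs, h, sq_abs]
    have e2 : (∫ x, ‖g x‖ ^ (2:ℝ) ∂μ) = ∫ x in Ioo (0:ℝ) L, g x ^ 2 := by
      apply integral_congr_ae
      filter_upwards with x
      have h := Real.rpow_natCast |g x| 2
      push_cast at h
      rw [Real.norm_eq_abs, h, sq_abs]
    rw [e1, e2]
    rw [Real.sqrt_eq_rpow, Real.sqrt_eq_rpow]
  -- conclude
  set A := ∫ x in Ioo (0:ℝ) L, φ x ^ 2 with hA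
  set B := ∫ x in Ioo (0:ℝ) L, (g x) ^ 2 with hB
  have hA0 : 0 ≤ A := integral_nonneg fun x => by positivity
  have hkey : A ≤ 2 * L * (Real.sqrt A * Real.sqrt B) := by
    calc A = 2 * L * ∫ x in Ioo (0:ℝ) L, φ x * g x := key
      _ ≤ 2 * L * (Real.sqrt A * Real.sqrt B) := by
          apply mul_le_mul_of_nonneg_left hCS (by positivity)
  rcases eq_or_lt_of_le (Real.sqrt_nonneg A) with h|h
  · rw [← h]; positivity
  · have hsq : Real.sqrt A * Real.sqrt A = A := Real.mul_self_sqrt hA0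
    have hmul : Real.sqrt A * Real.sqrt A ≤ (2 * L * Real.sqrt B) * Real.sqrt A := by
      calc Real.sqrt A * Real.sqrt A = A := hsq
        _ ≤ 2 * L * (Real.sqrt A * Real.sqrt B) := hkey
        _ = (2 * L * Real.sqrt B) * Real.sqrt A := by ring
    exact le_of_mul_le_mul_right hmul h
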